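/- Let A, B be n×n Hermitian matrices with A - zB a regular pencil. Then n₊(A,B) ≥ n₋(A) + n₋(B) − n, where n₊(A,B) is the number of positive real eigenvalues of the pencil counted with algebraic multiplicity. -/

import Mathlib

open Polynomial Matrix
open scoped ComplexOrder

noncomputable def pencil {n : ℕ} (A B : Matrix (Fin n) (Fin n) ℂ) : Polynomial ℂ :=
  (A.map (fun a => Polynomial.C a) - (Polynomial.X : Polynomial ℂ) • B.map (fun a => Polynomial.C a)).det

noncomputable def nPos {n : ℕ} {A : Matrix (Fin n) (Fin n) ℂ} (hA : A.IsHermitian) : ℕ :=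
  (Finset.univ.filter fun i => 0 < hA.eigenvalues i).card

noncomputable def nZero {n : ℕ} {A : Matrix (Fin n) (Fin n) ℂ} (hA : A.IsHermitian) : ℕ :=
  (Finset.univ.filter fun i => hA.eigenvalues i = 0).card

noncomputable def nNeg {n : ℕ} {A : Matrix (Fin n) (Fin n) ℂ} (hA : A.IsHermitian) : ℕ :=
  (Finset.univ.filter fun i => hA.eigenvalues i < 0).card

noncomputable def pencilPosCount {n : ℕ} (A B : Matrix (Fin n) (Fin n) ℂ) : ℕ :=
  ((pencil A B).roots.filter fun z => z.im = 0 ∧ 0 < z.re).card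

noncomputable def pencilNegCount {n : ℕ} (A B : Matrix (Fin n) (Fin n) ℂ) : ℕ :=
  ((pencil A B).roots.filter fun z => z.im = 0 ∧ z.re < 0).card

noncomputable def pencilRealCount {n : ℕ} (A B : Matrix (Fin n) (Fin n) ℂ) : ℕ :=
  ((pencil A B).roots.filter fun z => z.im = 0).card

noncomputable def pencilComplexCount {n : ℕ} (A B : Matrix (Fin n) (Fin n) ℂ) : ℕ :=
  ((pencil A B).roots.filter fun z => z.im ≠ 0).card

namespace Stmt4Aux


variable {n : ℕ} {ι : Type*} {H : Matrix (Fin n) (Fin n) ℂ}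

lemma sum_dotProduct' (s : Finset ι) (f : ι → (Fin n → ℂ)) (w : Fin n → ℂ) :
    (∑ i ∈ s, f i) ⬝ᵥ w = ∑ i ∈ s, f i ⬝ᵥ w := by
  simp only [dotProduct, Finset.sum_apply, Finset.sum_mul]
  exact Finset.sum_comm

lemma dotProduct_sum' (s : Finset ι) (w : Fin n → ℂ) (f : ι → (Fin n → ℂ)) :
    w ⬝ᵥ (∑ i ∈ s, f i) = ∑ i ∈ s, w ⬝ᵥ f i := by
  simp only [dotProduct, Finset.sum_apply, Finset.mul_sum]
  exact Finset.sum_comm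

noncomputable def qf (M : Matrix (Fin n) (Fin n) ℂ) (x : Fin n → ℂ) : ℝ :=
  (star x ⬝ᵥ (M *ᵥ x)).re

noncomputable def nsq (x : Fin n → ℂ) : ℝ := ∑ i, Complex.normSq (x i)

lemma nsq_nonneg (x : Fin n → ℂ) : 0 ≤ nsq x :=
  Finset.sum_nonneg fun i _ => Complex.normSq_nonneg _

lemma nsq_pos {x : Fin n → ℂ} (hx : x ≠ 0) : 0 < nsq x := by
  rcases Function.ne_iff.1 hx with ⟨i, hi⟩
  have h2 : 0 < Complex.normSq (x i) := by simpa [Complex.normSq_pos] using hi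
  exact lt_of_lt_of_le h2 (Finset.single_le_sum (f := fun i => Complex.normSq (x i))
    (fun j _ => Complex.normSq_nonneg _) (Finset.mem_univ i))

noncomputable def ev (hH : H.IsHermitian) (i : Fin n) : Fin n → ℂ :=
  ⇑(hH.eigenvectorBasis i)

lemma eigen_dot (hH : H.IsHermitian) (i j : Fin n) :
    star (ev hH i) ⬝ᵥ (ev hH j) = if i = j then 1 else 0 := by
  have := (orthonormal_iff_ite (𝕜 := ℂ)).1 hH.eigenvectorBasis.orthonormal i j
  rw [EuclideanSpace.inner_eq_star_dotProduct, dotProduct_comm] at this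
  simpa [ev] using this

lemma mulVec_ev (hH : H.IsHermitian) (i : Fin n) :
    H *ᵥ (ev hH i) = ((hH.eigenvalues i : ℂ)) • (ev hH i) := by
  have := hH.mulVec_eigenvectorBasis i
  rw [RCLike.real_smul_eq_coe_smul (K := ℂ)] at this
  exact this

lemma expansion_core (hH : H.IsHermitian) (P : Finset (Fin n)) (c : P → ℂ)
    (g : Fin n → ℂ) :
    star (∑ i : P, c i • ev hH i) ⬝ᵥ (∑ i : P, (c i * g i) • ev hH i)
    = ∑ i : P, (g i) * Complex.normSq (c i) := by
  rw [star_sum]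
  simp only [star_smul]
  rw [sum_dotProduct']
  rw [Finset.sum_congr rfl fun i _ => dotProduct_sum' _ _ _]
  rw [Finset.sum_congr rfl (fun i _ => Finset.sum_congr rfl fun j _ => by
    rw [smul_dotProduct, dotProduct_smul, eigen_dot hH])]
  rw [Finset.sum_congr rfl (fun i (_ : i ∈ Finset.univ) => Finset.sum_eq_single i
    (fun j _ hj => by
      rw [if_neg (fun h => hj ((Subtype.ext h).symm))]; simp)
    (by simp))]
  refine Finset.sum_congr rfl fun i _ => ?_
  simp only [if_pos rfl, smul_eq_mul, mul_one, Complex.normSq_eq_conj_mul_self,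
    Complex.star_def]
  push_cast
  ring

lemma dot_expansion (hH : H.IsHermitian) (P : Finset (Fin n)) (c : P → ℂ) :
    star (∑ i : P, c i • ev hH i) ⬝ᵥ (H *ᵥ (∑ i : P, c i • ev hH i))
    = ∑ i : P, ((hH.eigenvalues i : ℂ)) * Complex.normSq (c i) := by
  have hmv : H *ᵥ (∑ i : P, c i • ev hH i)
      = ∑ i : P, (c i * (hH.eigenvalues i : ℂ)) • ev hH i := by
    have h1 : H.mulVecLin (∑ i : P, c i • ev hH i)
        = ∑ i : P, H.mulVecLin (c i • ev hH i) := map_sum _ _ _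
    simp only [mulVecLin_apply] at h1
    rw [h1]
    refine Finset.sum_congr rfl fun i _ => ?_
    rw [mulVec_smul, mulVec_ev hH, smul_smul]
  rw [hmv]
  exact expansion_core hH P c (fun k => (hH.eigenvalues k : ℂ))

lemma norm_expansion (hH : H.IsHermitian) (P : Finset (Fin n)) (c : P → ℂ) :
    star (∑ i : P, c i • ev hH i) ⬝ᵥ (∑ i : P, c i • ev hH i)
    = ∑ i : P, (Complex.normSq (c i) : ℂ) := by
  have := expansion_core hH P c (fun _ => 1)
  simpa using this



lemma nsq_eq_re (x : Fin n → ℂ) : nsq x = (star x ⬝ᵥ x).re := by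
  simp [nsq, dotProduct, Complex.normSq_apply]

lemma ev_linearIndependent (hH : H.IsHermitian) (P : Finset (Fin n)) :
    LinearIndependent ℂ (fun i : P => ev hH i) := by
  rw [Fintype.linearIndependent_iff]
  intro c hc j
  have h1 : star (ev hH (j : Fin n)) ⬝ᵥ (∑ i : P, c i • ev hH i) = c j := by
    rw [dotProduct_sum']
    rw [Finset.sum_congr rfl (fun i _ => by
      rw [dotProduct_smul, eigen_dot hH])]
    rw [Finset.sum_eq_single j (fun i _ hi => by
      rw [if_neg (fun h => hi (Subtype.ext h.symm))]; simp) (by simp)]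
    simp
  rw [hc] at h1
  simpa using h1.symm

lemma exists_eigenspace (hH : H.IsHermitian) (P : Finset (Fin n)) :
    ∃ W : Submodule ℂ (Fin n → ℂ), Module.finrank ℂ W = P.card ∧
      ∀ x ∈ W, ∃ c : P → ℂ,
        qf H x = ∑ i : P, hH.eigenvalues i * Complex.normSq (c i) ∧
        nsq x = ∑ i : P, Complex.normSq (c i) := by
  refine ⟨Submodule.span ℂ (Set.range (fun i : P => ev hH i)), ?_, ?_⟩
  · rw [finrank_span_eq_card (ev_linearIndependent hH P)]
    simp
  · intro x hx
    obtain ⟨c, hc⟩ := (Submodule.mem_span_range_iff_exists_fun ℂ).1 hx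
    refine ⟨c, ?_, ?_⟩
    · rw [← hc]
      unfold qf
      rw [dot_expansion hH P c]
      rw [Complex.re_sum]
      refine Finset.sum_congr rfl fun i _ => ?_
      rw [show ((hH.eigenvalues i : ℂ) * (Complex.normSq (c i) : ℂ))
        = ((hH.eigenvalues i * Complex.normSq (c i) : ℝ) : ℂ) by push_cast; ring]
      exact Complex.ofReal_re _
    · rw [← hc, nsq_eq_re, norm_expansion hH P c, Complex.re_sum]
      refine Finset.sum_congr rfl fun i _ => ?_
      exact Complex.ofReal_re _


lemma finrank_le_nNeg (hH : H.IsHermitian) (W : Submodule ℂ (Fin n → ℂ))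
    (hW : ∀ x ∈ W, x ≠ 0 → qf H x < 0) : Module.finrank ℂ W ≤ nNeg hH := by
  classical
  set P := Finset.univ.filter (fun i => 0 ≤ hH.eigenvalues i) with hP
  obtain ⟨U, hUrank, hUq⟩ := exists_eigenspace hH P
  have hUnonneg : ∀ x ∈ U, 0 ≤ qf H x := by
    intro x hx
    obtain ⟨c, hq, -⟩ := hUq x hx
    rw [hq]
    refine Finset.sum_nonneg fun i _ => mul_nonneg ?_ (Complex.normSq_nonneg _)
    exact (Finset.mem_filter.1 i.2).2
  have hdisj : W ⊓ U = ⊥ := by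
    rw [Submodule.eq_bot_iff]
    intro x hx
    by_contra hx0
    exact absurd (hUnonneg x hx.2) (not_le.2 (hW x hx.1 hx0))
  have hcard : P.card = n - nNeg hH := by
    have h1 := Finset.card_filter_add_card_filter_not
      (s := (Finset.univ : Finset (Fin n))) (fun i => hH.eigenvalues i < 0)
    have h2 : Finset.univ.filter (fun i => ¬ hH.eigenvalues i < 0) = P := by
      simp [hP, not_lt]
    rw [h2] at h1
    simp only [Finset.card_univ, Fintype.card_fin] at h1
    unfold nNeg
    omega
  have hsum := Submodule.finrank_sup_add_finrank_inf_eq W U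
  rw [hdisj] at hsum
  have hle : Module.finrank ℂ ↥(W ⊔ U) ≤ n := by
    have := Submodule.finrank_le (W ⊔ U : Submodule ℂ (Fin n → ℂ))
    simpa [Module.finrank_pi] using this
  have hnn : nNeg hH ≤ n := by
    have := Finset.card_filter_le (Finset.univ : Finset (Fin n))
      (fun i => hH.eigenvalues i < 0)
    unfold nNeg
    simpa using this
  rw [hUrank, hcard] at hsum
  simp only [finrank_bot, add_zero] at hsum
  omega

lemma finrank_le_nPos (hH : H.IsHermitian) (W : Submodule ℂ (Fin n → ℂ))
    (hW : ∀ x ∈ W, x ≠ 0 → 0 < qf H x) : Module.finrank ℂ W ≤ nPos hH := by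
  classical
  set P := Finset.univ.filter (fun i => hH.eigenvalues i ≤ 0) with hP
  obtain ⟨U, hUrank, hUq⟩ := exists_eigenspace hH P
  have hUnonneg : ∀ x ∈ U, qf H x ≤ 0 := by
    intro x hx
    obtain ⟨c, hq, -⟩ := hUq x hx
    rw [hq]
    refine Finset.sum_nonpos fun i _ => mul_nonpos_of_nonpos_of_nonneg ?_ (Complex.normSq_nonneg _)
    exact (Finset.mem_filter.1 i.2).2
  have hdisj : W ⊓ U = ⊥ := by
    rw [Submodule.eq_bot_iff]
    intro x hx
    by_contra hx0
    exact absurd (hUnonneg x hx.2) (not_le.2 (hW x hx.1 hx0))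
  have hcard : P.card = n - nPos hH := by
    have h1 := Finset.card_filter_add_card_filter_not
      (s := (Finset.univ : Finset (Fin n))) (fun i => 0 < hH.eigenvalues i)
    have h2 : Finset.univ.filter (fun i => ¬ 0 < hH.eigenvalues i) = P := by
      simp [hP, not_lt]
    rw [h2] at h1
    simp only [Finset.card_univ, Fintype.card_fin] at h1
    unfold nPos
    omega
  have hsum := Submodule.finrank_sup_add_finrank_inf_eq W U
  rw [hdisj] at hsum
  have hle : Module.finrank ℂ ↥(W ⊔ U) ≤ n := by
    have := Submodule.finrank_le (W ⊔ U : Submodule ℂ (Fin n → ℂ))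
    simpa [Module.finrank_pi] using this
  have hnn : nPos hH ≤ n := by
    have := Finset.card_filter_le (Finset.univ : Finset (Fin n))
      (fun i => 0 < hH.eigenvalues i)
    unfold nPos
    simpa using this
  rw [hUrank, hcard] at hsum
  simp only [finrank_bot, add_zero] at hsum
  omega

lemma exists_neg_space (hH : H.IsHermitian) :
    ∃ δ : ℝ, 0 < δ ∧ ∃ W : Submodule ℂ (Fin n → ℂ),
      Module.finrank ℂ W = nNeg hH ∧ ∀ x ∈ W, qf H x ≤ -δ * nsq x := by
  classical
  set P := Finset.univ.filter (fun i => hH.eigenvalues i < 0) with hP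
  obtain ⟨W, hWrank, hWq⟩ := exists_eigenspace hH P
  by_cases h : P.Nonempty
  · refine ⟨-(P.sup' h hH.eigenvalues), ?_, W, hWrank, ?_⟩
    · have : P.sup' h hH.eigenvalues < 0 := by
        rw [Finset.sup'_lt_iff]
        intro i hi
        exact (Finset.mem_filter.1 hi).2
      linarith
    · intro x hx
      obtain ⟨c, hq, hn⟩ := hWq x hx
      rw [hq, hn, neg_neg, Finset.mul_sum]
      refine Finset.sum_le_sum fun i _ => ?_
      exact mul_le_mul_of_nonneg_right (Finset.le_sup' hH.eigenvalues i.2)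
        (Complex.normSq_nonneg _)
  · refine ⟨1, one_pos, W, hWrank, ?_⟩
    intro x hx
    obtain ⟨c, hq, hn⟩ := hWq x hx
    haveI : IsEmpty {x // x ∈ P} := ⟨fun i => h ⟨i.1, i.2⟩⟩
    rw [hq, hn]
    simp

lemma exists_pos_space (hH : H.IsHermitian) :
    ∃ δ : ℝ, 0 < δ ∧ ∃ W : Submodule ℂ (Fin n → ℂ),
      Module.finrank ℂ W = nPos hH ∧ ∀ x ∈ W, δ * nsq x ≤ qf H x := by
  classical
  set P := Finset.univ.filter (fun i => 0 < hH.eigenvalues i) with hP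
  obtain ⟨W, hWrank, hWq⟩ := exists_eigenspace hH P
  by_cases h : P.Nonempty
  · refine ⟨P.inf' h hH.eigenvalues, ?_, W, hWrank, ?_⟩
    · rw [Finset.lt_inf'_iff]
      intro i hi
      exact (Finset.mem_filter.1 hi).2
    · intro x hx
      obtain ⟨c, hq, hn⟩ := hWq x hx
      rw [hq, hn, Finset.mul_sum]
      refine Finset.sum_le_sum fun i _ => ?_
      exact mul_le_mul_of_nonneg_right (Finset.inf'_le hH.eigenvalues i.2)
        (Complex.normSq_nonneg _)
  · refine ⟨1, one_pos, W, hWrank, ?_⟩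
    intro x hx
    obtain ⟨c, hq, hn⟩ := hWq x hx
    haveI : IsEmpty {x // x ∈ P} := ⟨fun i => h ⟨i.1, i.2⟩⟩
    rw [hq, hn]
    simp

variable {A B : Matrix (Fin n) (Fin n) ℂ}

lemma isHermitian_Ht (hA : A.IsHermitian) (hB : B.IsHermitian) (t : ℝ) :
    (A - (t:ℂ) • B).IsHermitian := by
  have h : ((t:ℂ) • B).IsHermitian := by
    unfold Matrix.IsHermitian at *
    rw [conjTranspose_smul, hB]
    congr 1
    simp [Complex.star_def, Complex.conj_ofReal]
  exact hA.sub h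

lemma qf_sub_smul (t : ℝ) (x : Fin n → ℂ) :
    qf (A - (t:ℂ) • B) x = qf A x - t * qf B x := by
  unfold qf
  rw [sub_mulVec, smul_mulVec, dotProduct_sub, dotProduct_smul]
  simp [Complex.sub_re, Complex.smul_re]

lemma qf_abs_le (M : Matrix (Fin n) (Fin n) ℂ) (x : Fin n → ℂ) :
    |qf M x| ≤ (∑ i, ∑ j, ‖M i j‖) * nsq x := by
  have habs : ∀ i j, ‖x i‖ * ‖x j‖ ≤ nsq x := by
    intro i j
    have h1 : Complex.normSq (x i) ≤ nsq x := Finset.single_le_sum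
      (f := fun k => Complex.normSq (x k)) (fun k _ => Complex.normSq_nonneg _)
      (Finset.mem_univ i)
    have h2 : Complex.normSq (x j) ≤ nsq x := Finset.single_le_sum
      (f := fun k => Complex.normSq (x k)) (fun k _ => Complex.normSq_nonneg _)
      (Finset.mem_univ j)
    nlinarith [norm_nonneg (x i), norm_nonneg (x j),
      Complex.sq_norm (x i), Complex.sq_norm (x j)]
  calc |qf M x| ≤ ‖star x ⬝ᵥ (M *ᵥ x)‖ := Complex.abs_re_le_norm _
    _ ≤ ∑ i, ‖(star x) i * (M *ᵥ x) i‖ := norm_sum_le _ _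
    _ ≤ ∑ i, ∑ j, ‖M i j‖ * nsq x := by
        refine Finset.sum_le_sum fun i _ => ?_
        calc ‖(star x) i * (M *ᵥ x) i‖
            = ‖x i‖ * ‖(M *ᵥ x) i‖ := by
              simp [norm_mul]
          _ ≤ ‖x i‖ * ∑ j, ‖M i j * x j‖ := by
              refine mul_le_mul_of_nonneg_left ?_ (norm_nonneg _)
              exact norm_sum_le Finset.univ (fun j => M i j * x j)
          _ = ∑ j, ‖x i‖ * (‖M i j‖ * ‖x j‖) := by
              rw [Finset.mul_sum]
              exact Finset.sum_congr rfl fun j _ => by rw [norm_mul]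
          _ ≤ ∑ j, ‖M i j‖ * nsq x := by
              refine Finset.sum_le_sum fun j _ => ?_
              rw [show ‖x i‖ * (‖M i j‖ * ‖x j‖)
                = ‖M i j‖ * (‖x i‖ * ‖x j‖) by ring]
              exact mul_le_mul_of_nonneg_left (habs i j) (norm_nonneg _)
    _ = (∑ i, ∑ j, ‖M i j‖) * nsq x := by
        rw [Finset.sum_mul]
        exact Finset.sum_congr rfl fun i _ => by rw [Finset.sum_mul]

lemma counts_eq (hH : H.IsHermitian) : nNeg hH + nPos hH + nZero hH = n := by
  classical
  have h1 := Finset.card_filter_add_card_filter_not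
    (s := (Finset.univ : Finset (Fin n))) (fun i => hH.eigenvalues i < 0)
  have h2 := Finset.card_filter_add_card_filter_not
    (s := Finset.univ.filter (fun i => ¬ hH.eigenvalues i < 0))
    (fun i => 0 < hH.eigenvalues i)
  have e1 : (Finset.univ.filter (fun i => ¬ hH.eigenvalues i < 0)).filter
      (fun i => 0 < hH.eigenvalues i) = Finset.univ.filter (fun i => 0 < hH.eigenvalues i) := by
    ext i
    simp only [Finset.mem_filter, Finset.mem_univ, true_and, not_lt]
    exact ⟨fun h => h.2, fun h => ⟨le_of_lt h, h⟩⟩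
  have e2 : (Finset.univ.filter (fun i => ¬ hH.eigenvalues i < 0)).filter
      (fun i => ¬ 0 < hH.eigenvalues i) = Finset.univ.filter (fun i => hH.eigenvalues i = 0) := by
    ext i
    simp only [Finset.mem_filter, Finset.mem_univ, true_and, not_lt]
    constructor
    · intro h; exact le_antisymm h.2 h.1
    · intro h; exact ⟨le_of_eq h.symm, le_of_eq h⟩
  rw [e1, e2] at h2
  simp only [Finset.card_univ, Fintype.card_fin] at h1
  unfold nNeg nPos nZero
  omega

lemma semicont (hA : A.IsHermitian) (hB : B.IsHermitian) (t₀ : ℝ) :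
    ∃ δ : ℝ, 0 < δ ∧ ∀ t : ℝ, |t - t₀| < δ →
      nNeg (isHermitian_Ht hA hB t₀) ≤ nNeg (isHermitian_Ht hA hB t) ∧
      nPos (isHermitian_Ht hA hB t₀) ≤ nPos (isHermitian_Ht hA hB t) := by
  obtain ⟨δ₁, hδ₁, W₁, hrk₁, hq₁⟩ := exists_neg_space (isHermitian_Ht hA hB t₀)
  obtain ⟨δ₂, hδ₂, W₂, hrk₂, hq₂⟩ := exists_pos_space (isHermitian_Ht hA hB t₀)
  set CB := ∑ i, ∑ j, ‖B i j‖ with hCBdef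
  have hCB : 0 ≤ CB := Finset.sum_nonneg fun i _ =>
    Finset.sum_nonneg fun j _ => norm_nonneg _
  refine ⟨min δ₁ δ₂ / (CB + 1), by positivity, fun t ht => ?_⟩
  have hkey : ∀ x : Fin n → ℂ, x ≠ 0 → |t - t₀| * |qf B x| < min δ₁ δ₂ * nsq x := by
    intro x hx0
    have hn := nsq_pos hx0
    have h2 : |qf B x| ≤ CB * nsq x := qf_abs_le B x
    have h3 : |t - t₀| * |qf B x| ≤ |t - t₀| * (CB * nsq x) :=
      mul_le_mul_of_nonneg_left h2 (abs_nonneg _)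
    have h4 : |t - t₀| * (CB * nsq x) < (min δ₁ δ₂ / (CB + 1)) * ((CB + 1) * nsq x) := by
      have hlt : |t - t₀| * (CB * nsq x) ≤ |t - t₀| * ((CB+1) * nsq x) := by
        refine mul_le_mul_of_nonneg_left ?_ (abs_nonneg _)
        nlinarith
      have : |t - t₀| * ((CB+1) * nsq x) < (min δ₁ δ₂ / (CB + 1)) * ((CB + 1) * nsq x) := by
        refine mul_lt_mul_of_pos_right ht ?_
        positivity
      linarith
    have h5 : (min δ₁ δ₂ / (CB + 1)) * ((CB + 1) * nsq x) = min δ₁ δ₂ * nsq x := by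
      have hne : CB + 1 ≠ 0 := by positivity
      field_simp
    linarith
  have hqt : ∀ x : Fin n → ℂ, qf (A - (t:ℂ) • B) x
      = qf (A - (t₀:ℂ) • B) x - (t - t₀) * qf B x := by
    intro x
    rw [qf_sub_smul, qf_sub_smul]
    ring
  constructor
  · rw [← hrk₁]
    apply finrank_le_nNeg
    intro x hx hx0
    have h1 := hq₁ x hx
    have h6 : -((t - t₀) * qf B x) ≤ |t - t₀| * |qf B x| := by
      rw [← abs_mul]; exact neg_le_abs _
    have h7 := hkey x hx0
    have hn := nsq_pos hx0
    have h8 : min δ₁ δ₂ ≤ δ₁ := min_le_left _ _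
    have h9 : min δ₁ δ₂ * nsq x ≤ δ₁ * nsq x :=
      mul_le_mul_of_nonneg_right h8 (le_of_lt hn)
    rw [hqt x]
    nlinarith
  · rw [← hrk₂]
    apply finrank_le_nPos
    intro x hx hx0
    have h1 := hq₂ x hx
    have h6 : (t - t₀) * qf B x ≤ |t - t₀| * |qf B x| := by
      rw [← abs_mul]; exact le_abs_self _
    have h7 := hkey x hx0
    have hn := nsq_pos hx0
    have h8 : min δ₁ δ₂ ≤ δ₂ := min_le_right _ _
    have h9 : min δ₁ δ₂ * nsq x ≤ δ₂ * nsq x :=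
      mul_le_mul_of_nonneg_right h8 (le_of_lt hn)
    rw [hqt x]
    nlinarith

lemma eval_pencil (A B : Matrix (Fin n) (Fin n) ℂ) (z : ℂ) :
    (pencil A B).eval z = (A - z • B).det := by
  unfold pencil
  have h := RingHom.map_det (Polynomial.evalRingHom z)
    (A.map (fun a => Polynomial.C a) - (Polynomial.X : Polynomial ℂ) • B.map (fun a => Polynomial.C a))
  rw [show ((Polynomial.evalRingHom z)
      ((A.map (fun a => Polynomial.C a) - (Polynomial.X : Polynomial ℂ) • B.map (fun a => Polynomial.C a)).det))
    = (A.map (fun a => Polynomial.C a) - (Polynomial.X : Polynomial ℂ) • B.map (fun a => Polynomial.C a)).det.eval z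
      from rfl] at h
  rw [h]
  congr 1
  ext i j
  simp [Matrix.sub_apply, Matrix.smul_apply, Matrix.map_apply, smul_eq_mul]
  ring

lemma nZero_eq_zero_of_not_root (hA : A.IsHermitian) (hB : B.IsHermitian) (t : ℝ)
    (h : ¬ (pencil A B).IsRoot ((t : ℝ) : ℂ)) : nZero (isHermitian_Ht hA hB t) = 0 := by
  classical
  have hdet : (A - ((t:ℝ):ℂ) • B).det ≠ 0 := by
    intro hd
    exact h (by rw [Polynomial.IsRoot, eval_pencil, hd])
  rw [(isHermitian_Ht hA hB t).det_eq_prod_eigenvalues] at hdet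
  unfold nZero
  rw [Finset.card_eq_zero, Finset.filter_eq_empty_iff]
  intro i _
  intro h0
  exact hdet (Finset.prod_eq_zero (Finset.mem_univ i) (by rw [h0]; simp))

lemma nNeg_congr {A A' : Matrix (Fin n) (Fin n) ℂ} (h : A = A')
    (hA : A.IsHermitian) (hA' : A'.IsHermitian) : nNeg hA = nNeg hA' := by
  subst h; rfl

lemma exists_bigT (hA : A.IsHermitian) (hB : B.IsHermitian) :
    ∃ T : ℝ, 1 ≤ T ∧ nNeg hB ≤ nPos (isHermitian_Ht hA hB T) := by
  obtain ⟨δ, hδ, W, hrk, hq⟩ := exists_neg_space hB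
  set CA := ∑ i, ∑ j, ‖A i j‖ with hCAdef
  have hCA : 0 ≤ CA := Finset.sum_nonneg fun i _ =>
    Finset.sum_nonneg fun j _ => norm_nonneg _
  set T := max 1 ((CA + 1)/δ) with hT
  refine ⟨T, le_max_left _ _, ?_⟩
  rw [← hrk]
  apply finrank_le_nPos
  intro x hx hx0
  have hn := nsq_pos hx0
  have h1 := hq x hx
  have h2 : |qf A x| ≤ CA * nsq x := qf_abs_le A x
  have hT0 : 0 < T := lt_of_lt_of_le one_pos (le_max_left _ _)
  have hTd : CA + 1 ≤ T * δ := by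
    have : (CA + 1)/δ ≤ T := le_max_right _ _
    rw [div_le_iff₀ hδ] at this
    linarith
  have h3 : T * qf B x ≤ T * (-δ * nsq x) := mul_le_mul_of_nonneg_left h1 (le_of_lt hT0)
  have h4 : -(CA * nsq x) ≤ qf A x := by
    have := neg_abs_le (qf A x)
    linarith
  rw [qf_sub_smul]
  nlinarith

lemma exists_basis_ker (K : Submodule ℂ (Fin n → ℂ)) :
    ∃ (b : Module.Basis (Fin n) ℂ (Fin n → ℂ)) (s : Finset (Fin n)),
      s.card = Module.finrank ℂ K ∧ ∀ j ∈ s, b j ∈ K := by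
  classical
  obtain ⟨Q, hQ⟩ := Submodule.exists_isCompl K
  have hkm := Submodule.finrank_add_eq_of_isCompl hQ
  rw [Module.finrank_pi, Fintype.card_fin] at hkm
  set k := Module.finrank ℂ K
  set m := Module.finrank ℂ Q
  let bK : Module.Basis (Fin k) ℂ K := Module.finBasis ℂ K
  let bQ : Module.Basis (Fin m) ℂ Q := Module.finBasis ℂ Q
  let e : (Fin k ⊕ Fin m) ≃ Fin n := finSumFinEquiv.trans (finCongr hkm)
  let bb : Module.Basis (Fin k ⊕ Fin m) ℂ (Fin n → ℂ) :=
    (bK.prod bQ).map (Submodule.prodEquivOfIsCompl K Q hQ)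
  refine ⟨bb.reindex e, Finset.univ.image (fun i : Fin k => e (Sum.inl i)), ?_, ?_⟩
  · rw [Finset.card_image_of_injective _ (fun i j h => by
      have := e.injective h
      simpa using this)]
    simp
  · intro j hj
    obtain ⟨i, -, rfl⟩ := Finset.mem_image.1 hj
    rw [Module.Basis.reindex_apply, Equiv.symm_apply_apply]
    show ((bK.prod bQ).map (Submodule.prodEquivOfIsCompl K Q hQ)) (Sum.inl i) ∈ K
    rw [Module.Basis.map_apply, Module.Basis.prod_apply]
    simp [Submodule.coe_prodEquivOfIsCompl]

lemma pencil_dvd_aux (t : ℝ) (b : Module.Basis (Fin n) ℂ (Fin n → ℂ)) (s : Finset (Fin n))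
    (hb : ∀ j ∈ s, b j ∈ LinearMap.ker (A - ((t:ℝ):ℂ) • B).mulVecLin) :
    (Polynomial.X - Polynomial.C ((t:ℝ):ℂ)) ^ s.card ∣ pencil A B := by
  classical
  set t' : ℂ := ((t:ℝ):ℂ)
  set M : Matrix (Fin n) (Fin n) (Polynomial ℂ) :=
    A.map (fun a => Polynomial.C a) - (Polynomial.X : Polynomial ℂ) • B.map (fun a => Polynomial.C a)
    with hM
  set S : Matrix (Fin n) (Fin n) ℂ := (Pi.basisFun ℂ (Fin n)).toMatrix ⇑b with hS
  have hSdet : IsUnit S.det := by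
    rw [← Module.Basis.det_apply]
    exact (Pi.basisFun ℂ (Fin n)).isUnit_det b
  set d : Fin n → Polynomial ℂ := fun j => if j ∈ s then (Polynomial.C t' - Polynomial.X) else 1
    with hd
  set Qm : Matrix (Fin n) (Fin n) (Polynomial ℂ) := fun i j =>
    if j ∈ s then Polynomial.C ((B *ᵥ (b j)) i) else (M * S.map Polynomial.C) i j with hQm
  have hcol : ∀ j ∈ s, ∀ i, (M * S.map Polynomial.C) i j
      = Polynomial.C ((B *ᵥ (b j)) i) * (Polynomial.C t' - Polynomial.X) := by
    intro j hj i
    have hker := hb j hj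
    rw [LinearMap.mem_ker, mulVecLin_apply, sub_mulVec, smul_mulVec, sub_eq_zero] at hker
    have hSj : ∀ l, S l j = b j l := by
      intro l
      simp [hS, Module.Basis.toMatrix, Pi.basisFun_repr]
    have : (M * S.map Polynomial.C) i j
        = ∑ l, (Polynomial.C (A i l) - Polynomial.X * Polynomial.C (B i l)) * Polynomial.C (b j l) := by
      rw [Matrix.mul_apply]
      refine Finset.sum_congr rfl fun l _ => ?_
      rw [Matrix.map_apply, hSj l]
      simp [hM, Matrix.sub_apply, Matrix.smul_apply, smul_eq_mul]
    rw [this]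
    have hexp : ∀ l, (Polynomial.C (A i l) - Polynomial.X * Polynomial.C (B i l)) * Polynomial.C (b j l)
        = Polynomial.C (A i l * b j l) - Polynomial.X * Polynomial.C (B i l * b j l) := by
      intro l
      rw [sub_mul, _root_.map_mul, _root_.map_mul]
      ring
    rw [Finset.sum_congr rfl fun l _ => hexp l, Finset.sum_sub_distrib]
    rw [← Finset.mul_sum, ← map_sum, ← map_sum]
    have hAv : (∑ l, A i l * b j l) = (A *ᵥ (b j)) i := rfl
    have hBv : (∑ l, B i l * b j l) = (B *ᵥ (b j)) i := rfl
    rw [hAv, hBv, congrFun hker i]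
    show Polynomial.C (t' • (B *ᵥ b j) i) - _ = _
    rw [smul_eq_mul, _root_.map_mul]
    ring
  have hfact : M * S.map Polynomial.C = Qm * Matrix.diagonal d := by
    ext i j
    rw [Matrix.mul_diagonal]
    by_cases hj : j ∈ s
    · rw [hcol j hj i]
      simp [hQm, hd, hj]
    · simp [hQm, hd, hj]
  have hdet : pencil A B * Polynomial.C S.det
      = Qm.det * (Polynomial.C t' - Polynomial.X) ^ s.card := by
    have h1 : (M * S.map Polynomial.C).det = M.det * (S.map Polynomial.C).det := Matrix.det_mul _ _
    have h2 : (S.map Polynomial.C).det = Polynomial.C S.det := by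
      rw [RingHom.map_det]
      rfl
    have h3 : (Qm * Matrix.diagonal d).det = Qm.det * ∏ j, d j := by
      rw [Matrix.det_mul, Matrix.det_diagonal]
    have h4 : ∏ j, d j = (Polynomial.C t' - Polynomial.X) ^ s.card := by
      rw [hd]
      rw [Finset.prod_ite_mem Finset.univ s (fun _ => Polynomial.C t' - Polynomial.X)]
      rw [Finset.univ_inter, Finset.prod_const]
    rw [show pencil A B = M.det from rfl, ← h2, ← h1, hfact, h3, h4]
  have hdvd : (Polynomial.X - Polynomial.C t') ^ s.card ∣ pencil A B * Polynomial.C S.det := by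
    rw [hdet]
    refine Dvd.dvd.mul_left ?_ _
    exact pow_dvd_pow_of_dvd ⟨-1, by ring⟩ _
  have hu : IsUnit (Polynomial.C S.det) := Polynomial.isUnit_C.2 hSdet
  exact (IsUnit.dvd_mul_right hu).1 hdvd


lemma nZero_eq_finrank_ker (hA : A.IsHermitian) (hB : B.IsHermitian) (t : ℝ) :
    nZero (isHermitian_Ht hA hB t)
      = Module.finrank ℂ (LinearMap.ker (A - ((t:ℝ):ℂ) • B).mulVecLin) := by
  classical
  set hH := isHermitian_Ht hA hB t
  have h1 := hH.rank_eq_card_non_zero_eigs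
  have h2 : Fintype.card {i // hH.eigenvalues i ≠ 0}
      = (Finset.univ.filter fun i => hH.eigenvalues i ≠ 0).card := Fintype.card_subtype _
  have h3 := Finset.card_filter_add_card_filter_not
    (s := (Finset.univ : Finset (Fin n))) (fun i => hH.eigenvalues i ≠ 0)
  have e : Finset.univ.filter (fun i => ¬ hH.eigenvalues i ≠ 0)
      = Finset.univ.filter (fun i => hH.eigenvalues i = 0) := by
    ext i; simp [not_not]
  rw [e] at h3
  simp only [Finset.card_univ, Fintype.card_fin] at h3
  have h4 : (A - ((t:ℝ):ℂ) • B).rank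
      = Module.finrank ℂ (LinearMap.range (A - ((t:ℝ):ℂ) • B).mulVecLin) := rfl
  have h5 := LinearMap.finrank_range_add_finrank_ker (A - ((t:ℝ):ℂ) • B).mulVecLin
  rw [Module.finrank_pi, Fintype.card_fin] at h5
  rw [h2] at h1
  rw [h4] at h1
  unfold nZero
  omega

lemma nZero_le_rootMultiplicity (hA : A.IsHermitian) (hB : B.IsHermitian)
    (hreg : pencil A B ≠ 0) (t : ℝ) :
    nZero (isHermitian_Ht hA hB t) ≤ (pencil A B).rootMultiplicity ((t:ℝ):ℂ) := by
  obtain ⟨b, s, hcard, hbs⟩ :=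
    exists_basis_ker (LinearMap.ker (A - ((t:ℝ):ℂ) • B).mulVecLin)
  have hdvd := pencil_dvd_aux t b s hbs
  have hle := (Polynomial.le_rootMultiplicity_iff hreg).2 hdvd
  rw [nZero_eq_finrank_ker hA hB, ← hcard]
  exact hle


noncomputable def nuF (hA : A.IsHermitian) (hB : B.IsHermitian) (t : ℝ) : ℕ :=
  nNeg (isHermitian_Ht hA hB t)

noncomputable def zeF (hA : A.IsHermitian) (hB : B.IsHermitian) (t : ℝ) : ℕ :=
  nZero (isHermitian_Ht hA hB t)

noncomputable def rootsR (A B : Matrix (Fin n) (Fin n) ℂ) : Finset ℝ :=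
  Finset.image Complex.re (((pencil A B).roots.toFinset).filter fun z => z.im = 0)

noncomputable def RR (hA : A.IsHermitian) (hB : B.IsHermitian) (ε u : ℝ) : ℕ :=
  ∑ s ∈ (rootsR A B).filter (fun s => ε < s ∧ s ≤ u), zeF hA hB s

lemma mem_rootsR (hreg : pencil A B ≠ 0) {u : ℝ} (hu : (pencil A B).IsRoot ((u:ℝ):ℂ)) :
    u ∈ rootsR A B := by
  refine Finset.mem_image.2 ⟨((u:ℝ):ℂ), ?_, Complex.ofReal_re u⟩
  refine Finset.mem_filter.2 ⟨?_, Complex.ofReal_im u⟩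
  rw [Multiset.mem_toFinset, Polynomial.mem_roots hreg]
  exact hu

lemma zeF_eq_zero_of_not_mem (hA : A.IsHermitian) (hB : B.IsHermitian)
    (hreg : pencil A B ≠ 0) {u : ℝ} (hu : u ∉ rootsR A B) : zeF hA hB u = 0 := by
  apply nZero_eq_zero_of_not_root hA hB
  intro hroot
  exact hu (mem_rootsR hreg hroot)

lemma semicont' (hA : A.IsHermitian) (hB : B.IsHermitian) (t₀ : ℝ) :
    ∃ δ : ℝ, 0 < δ ∧ ∀ u : ℝ, |u - t₀| < δ →
      nuF hA hB t₀ ≤ nuF hA hB u ∧ nuF hA hB u ≤ nuF hA hB t₀ + zeF hA hB t₀ := by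
  obtain ⟨δ, hδ, h⟩ := semicont hA hB t₀
  refine ⟨δ, hδ, fun u hu => ⟨(h u hu).1, ?_⟩⟩
  have h1 := (h u hu).2
  have c1 := counts_eq (isHermitian_Ht hA hB u)
  have c2 := counts_eq (isHermitian_Ht hA hB t₀)
  unfold nuF zeF
  omega

lemma count_lemma (hA : A.IsHermitian) (hB : B.IsHermitian) (hreg : pencil A B ≠ 0)
    {ε T : ℝ} (hεT : ε ≤ T) :
    nuF hA hB ε ≤ nuF hA hB T + RR hA hB ε T := by
  classical
  set V : Set ℝ := {u | u ∈ Set.Icc ε T ∧ nuF hA hB ε ≤ nuF hA hB u + RR hA hB ε u} with hV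
  have hR_eps : RR hA hB ε ε = 0 := by
    unfold RR
    rw [Finset.filter_false_of_mem (fun s _ h => absurd (h.1.trans_le h.2) (lt_irrefl _))]
    simp
  have hεV : ε ∈ V := ⟨⟨le_refl ε, hεT⟩, by rw [hR_eps]; omega⟩
  have hVne : V.Nonempty := ⟨ε, hεV⟩
  have hVbdd : BddAbove V := ⟨T, fun u hu => hu.1.2⟩
  set c := sSup V with hc
  have hcε : ε ≤ c := le_csSup hVbdd hεV
  have hcT : c ≤ T := csSup_le hVne (fun u hu => hu.1.2)
  obtain ⟨δ, hδ, hsc⟩ := semicont' hA hB c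
  have hcV : nuF hA hB ε ≤ nuF hA hB c + RR hA hB ε c := by
    obtain ⟨u, huV, huc⟩ := exists_lt_of_lt_csSup hVne (by linarith : c - δ < c)
    have huc' : u ≤ c := le_csSup hVbdd huV
    have habs : |u - c| < δ := abs_lt.2 ⟨by linarith, by linarith⟩
    have h1 := (hsc u habs).2
    rcases eq_or_lt_of_le huc' with heq | hlt
    · rw [← heq]; exact huV.2
    · have hεu : ε ≤ u := huV.1.1
      have h2 := huV.2
      by_cases hcr : c ∈ rootsR A B
      · have hεc : ε < c := lt_of_le_of_lt hεu hlt
        have hnotmem : c ∉ (rootsR A B).filter (fun s => ε < s ∧ s ≤ u) := by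
          intro h
          exact absurd ((Finset.mem_filter.1 h).2.2) (not_le.2 hlt)
        have hsub : insert c ((rootsR A B).filter (fun s => ε < s ∧ s ≤ u))
            ⊆ (rootsR A B).filter (fun s => ε < s ∧ s ≤ c) := by
          intro s hs
          rcases Finset.mem_insert.1 hs with rfl | hs'
          · exact Finset.mem_filter.2 ⟨hcr, hεc, le_refl _⟩
          · obtain ⟨h1', h2'⟩ := Finset.mem_filter.1 hs'
            exact Finset.mem_filter.2 ⟨h1', h2'.1, h2'.2.trans (le_of_lt hlt)⟩
        have hsum := Finset.sum_le_sum_of_subset (f := zeF hA hB) hsub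
        rw [Finset.sum_insert hnotmem] at hsum
        unfold RR at h2 ⊢
        omega
      · have hz : zeF hA hB c = 0 := zeF_eq_zero_of_not_mem hA hB hreg hcr
        have hsub : (rootsR A B).filter (fun s => ε < s ∧ s ≤ u)
            ⊆ (rootsR A B).filter (fun s => ε < s ∧ s ≤ c) := by
          intro s hs
          obtain ⟨h1', h2'⟩ := Finset.mem_filter.1 hs
          exact Finset.mem_filter.2 ⟨h1', h2'.1, h2'.2.trans huc'⟩
        have hsum := Finset.sum_le_sum_of_subset (f := zeF hA hB) hsub
        unfold RR at h2 ⊢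
        omega
  rcases eq_or_lt_of_le hcT with heqT | hltT
  · rw [← heqT]; exact hcV
  · exfalso
    set u := min (c + δ/2) T with hu
    have hcu : c < u := lt_min (by linarith) hltT
    have huT : u ≤ T := min_le_right _ _
    have hεu : ε ≤ u := le_trans hcε (le_of_lt hcu)
    have hucd : u ≤ c + δ/2 := min_le_left _ _
    have habs : |u - c| < δ := abs_lt.2 ⟨by linarith, by linarith⟩
    have h1 := (hsc u habs).1
    have hmono : RR hA hB ε c ≤ RR hA hB ε u := by
      apply Finset.sum_le_sum_of_subset
      intro s hs
      obtain ⟨h1', h2'⟩ := Finset.mem_filter.1 hs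
      exact Finset.mem_filter.2 ⟨h1', h2'.1, h2'.2.trans (le_of_lt hcu)⟩
    have huV : u ∈ V := ⟨⟨hεu, huT⟩, by omega⟩
    have : u ≤ c := le_csSup hVbdd huV
    linarith

lemma RR_le (hA : A.IsHermitian) (hB : B.IsHermitian) (hreg : pencil A B ≠ 0)
    {ε : ℝ} (T : ℝ) (hε : 0 < ε) :
    RR hA hB ε T ≤ pencilPosCount A B := by
  classical
  set m : Multiset ℂ := (pencil A B).roots.filter (fun z => z.im = 0 ∧ 0 < z.re) with hm
  set F := (rootsR A B).filter (fun s => ε < s ∧ s ≤ T) with hF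
  have step1 : ∀ s ∈ F, zeF hA hB s ≤ Multiset.count ((s:ℝ):ℂ) m := by
    intro s hs
    obtain ⟨-, hs1, -⟩ := Finset.mem_filter.1 hs
    have hpred : ((s:ℝ):ℂ).im = 0 ∧ 0 < ((s:ℝ):ℂ).re := by
      constructor
      · exact Complex.ofReal_im s
      · rw [Complex.ofReal_re]; linarith
    have hcf : Multiset.count ((s:ℝ):ℂ) m = Multiset.count ((s:ℝ):ℂ) (pencil A B).roots := by
      rw [hm, Multiset.count_filter]
      simp only [hpred, and_self, if_true]
    rw [hcf, Polynomial.count_roots]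
    exact nZero_le_rootMultiplicity hA hB hreg s
  have step2 : RR hA hB ε T ≤ ∑ s ∈ F, Multiset.count ((s:ℝ):ℂ) m :=
    Finset.sum_le_sum step1
  have step3 : ∑ s ∈ F, Multiset.count ((s:ℝ):ℂ) m
      = ∑ z ∈ F.image (fun s : ℝ => ((s:ℝ):ℂ)), Multiset.count z m := by
    rw [Finset.sum_image (fun x _ y _ h => Complex.ofReal_injective h)]
  have step4 : ∑ z ∈ F.image (fun s : ℝ => ((s:ℝ):ℂ)), Multiset.count z m
      ≤ ∑ z ∈ m.toFinset, Multiset.count z m := by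
    refine Finset.sum_le_sum_of_ne_zero fun z _ hz => ?_
    rw [Multiset.mem_toFinset]
    by_contra hmem
    exact hz (Multiset.count_eq_zero.2 hmem)
  rw [Multiset.toFinset_sum_count_eq] at step4
  calc RR hA hB ε T ≤ ∑ s ∈ F, Multiset.count ((s:ℝ):ℂ) m := step2
    _ = _ := step3
    _ ≤ Multiset.card m := step4
    _ = pencilPosCount A B := rfl

end Stmt4Aux

theorem stmt4 {n : ℕ} (A B : Matrix (Fin n) (Fin n) ℂ)
    (hA : A.IsHermitian) (hB : B.IsHermitian) (hreg : pencil A B ≠ 0) :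
    nNeg hA + nNeg hB ≤ pencilPosCount A B + n := by
  classical
  obtain ⟨δ₀, hδ₀, hsc0⟩ := Stmt4Aux.semicont' hA hB 0
  obtain ⟨T, hT1, hTb⟩ := Stmt4Aux.exists_bigT hA hB
  set ε := min (δ₀/2) T with hε'
  have hεpos : 0 < ε := lt_min (by linarith) (lt_of_lt_of_le one_pos hT1)
  have hεT : ε ≤ T := min_le_right _ _
  have h0 : Stmt4Aux.nuF hA hB 0 = nNeg hA := by
    exact Stmt4Aux.nNeg_congr (by norm_num) _ hA
  have habs : |ε - 0| < δ₀ := by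
    rw [sub_zero, abs_of_pos hεpos]
    have h : ε ≤ δ₀/2 := min_le_left _ _
    linarith
  have h1 : nNeg hA ≤ Stmt4Aux.nuF hA hB ε := by
    rw [← h0]; exact (hsc0 ε habs).1
  have h2 := Stmt4Aux.count_lemma hA hB hreg hεT
  have h3 := Stmt4Aux.RR_le hA hB hreg T hεpos
  have h4 := Stmt4Aux.counts_eq (Stmt4Aux.isHermitian_Ht hA hB T)
  have h5 : Stmt4Aux.nuF hA hB T + nNeg hB ≤ n := by
    unfold Stmt4Aux.nuF
    omega
  omega
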